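/- Let X be a real-valued stochastic process with stationary independent increments (a Lévy process), f : [0,∞) → ℝ measurable, and 0 ≤ a < b < c. Then P(X(t) ≤ f(t) for all t ∈ [a,c]) ≥ P(X(t) ≤ f(t) for all t ∈ [a,b]) · P(X(t) ≤ f(t) for all t ∈ [b,c]). -/

import Mathlib

open MeasureTheory ProbabilityTheory Set
open scoped ENNReal

lemma ennreal_rearrange {a A b B : ℝ≥0∞} (hA : a ≤ A) (hB : b ≤ B) :
    A * b + a * B ≤ A * B + a * b := by
  calc A * b + a * B = A * b + a * ((B - b) + b) := by rw [tsub_add_cancel_of_le hB]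
    _ = A * b + (a * (B - b) + a * b) := by rw [mul_add]
    _ ≤ A * b + (A * (B - b) + a * b) := by
        gcongr
    _ = (A * b + A * (B - b)) + a * b := by ring
    _ = A * ((B - b) + b) + a * b := by ring_nf
    _ = A * B + a * b := by rw [tsub_add_cancel_of_le hB]

lemma chebyshev_antitone {α : Type*} [MeasurableSpace α] [LinearOrder α]
    (ν : Measure α) [IsProbabilityMeasure ν] {φ ψ : α → ℝ≥0∞}
    (hφm : Measurable φ) (hψm : Measurable ψ) (hφ : Antitone φ) (hψ : Antitone ψ) :
    (∫⁻ x, φ x ∂ν) * ∫⁻ x, ψ x ∂ν ≤ ∫⁻ x, φ x * ψ x ∂ν := by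
  have key : ∀ x y : α, φ x * ψ y + φ y * ψ x ≤ φ x * ψ x + φ y * ψ y := by
    intro x y
    rcases le_total x y with h | h
    · exact ennreal_rearrange (hφ h) (hψ h)
    · calc φ x * ψ y + φ y * ψ x = φ y * ψ x + φ x * ψ y := by ring
        _ ≤ φ y * ψ y + φ x * ψ x := ennreal_rearrange (hφ h) (hψ h)
        _ = φ x * ψ x + φ y * ψ y := by ring
  have h2 : (∫⁻ x, φ x ∂ν) * (∫⁻ x, ψ x ∂ν) + (∫⁻ x, φ x ∂ν) * (∫⁻ x, ψ x ∂ν)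
      ≤ (∫⁻ x, φ x * ψ x ∂ν) + (∫⁻ x, φ x * ψ x ∂ν) := by
    have lhs : ∫⁻ x, (φ x * ∫⁻ y, ψ y ∂ν + (∫⁻ y, φ y ∂ν) * ψ x) ∂ν
        = (∫⁻ x, φ x ∂ν) * (∫⁻ x, ψ x ∂ν) + (∫⁻ x, φ x ∂ν) * (∫⁻ x, ψ x ∂ν) := by
      rw [lintegral_add_left (hφm.mul_const _), lintegral_mul_const _ hφm,
        lintegral_const_mul _ hψm]
    have rhs : ∫⁻ x, (φ x * ψ x + ∫⁻ y, φ y * ψ y ∂ν) ∂ν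
        = (∫⁻ x, φ x * ψ x ∂ν) + (∫⁻ x, φ x * ψ x ∂ν) := by
      rw [lintegral_add_left (f := fun x => φ x * ψ x) (hφm.mul hψm), lintegral_const, measure_univ, mul_one]
    rw [← lhs, ← rhs]
    refine lintegral_mono fun x => ?_
    have inner : ∀ x : α, (∫⁻ y, (φ x * ψ y + φ y * ψ x) ∂ν)
        ≤ ∫⁻ y, (φ x * ψ x + φ y * ψ y) ∂ν := fun x => lintegral_mono fun y => key x y
    calc φ x * ∫⁻ y, ψ y ∂ν + (∫⁻ y, φ y ∂ν) * ψ x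
        = ∫⁻ y, (φ x * ψ y + φ y * ψ x) ∂ν := by
          rw [lintegral_add_left (hψm.const_mul _), lintegral_const_mul _ hψm,
            lintegral_mul_const _ hφm]
      _ ≤ ∫⁻ y, (φ x * ψ x + φ y * ψ y) ∂ν := inner x
      _ = φ x * ψ x + ∫⁻ y, φ y * ψ y ∂ν := by
          rw [lintegral_add_right _ (g := fun x => φ x * ψ x) (hφm.mul hψm), lintegral_const, measure_univ, mul_one]
  have h2' : 2 * ((∫⁻ x, φ x ∂ν) * ∫⁻ x, ψ x ∂ν) ≤ 2 * ∫⁻ x, φ x * ψ x ∂ν := by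
    rw [two_mul, two_mul]; exact h2
  exact (ENNReal.mul_le_mul_iff_right (by norm_num) (by norm_num)).mp h2'

lemma harris_pi : ∀ (n : ℕ) (ν : Fin n → Measure ℝ), (∀ i, IsProbabilityMeasure (ν i)) →
    ∀ (F G : (Fin n → ℝ) → ℝ≥0∞), Measurable F → Measurable G → Antitone F → Antitone G →
    (∫⁻ x, F x ∂Measure.pi ν) * ∫⁻ x, G x ∂Measure.pi ν ≤ ∫⁻ x, F x * G x ∂Measure.pi ν := by
  intro n
  induction n with
  | zero =>
    intro ν hν F G hFm hGm hFa hGa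
    haveI := hν
    rw [lintegral_unique, lintegral_unique, lintegral_unique, measure_univ]
    simp
  | succ n ih =>
    intro ν hν F G hFm hGm hFa hGa
    haveI := hν
    set e := MeasurableEquiv.piFinSuccAbove (fun _ : Fin (n + 1) => ℝ) 0 with he
    have mp := measurePreserving_piFinSuccAbove ν 0
    set νr : Fin n → Measure ℝ := fun j => ν ((0 : Fin (n+1)).succAbove j) with hνr
    haveI : ∀ j, IsProbabilityMeasure (νr j) := fun j => hν _
    -- symm monotone
    have hsymm_mono : ∀ (x x' : ℝ) (y y' : Fin n → ℝ), x ≤ x' → y ≤ y' →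
        e.symm (x, y) ≤ e.symm (x', y') := by
      intro x x' y y' hx hy i
      have : e.symm (x, y) = Fin.insertNth 0 x y := rfl
      rw [this]
      have : e.symm (x', y') = Fin.insertNth 0 x' y' := rfl
      rw [this]
      refine Fin.cases ?_ ?_ i
      · simpa using hx
      · intro j
        simpa using hy j
    have hesym : Measurable (fun p : ℝ × (Fin n → ℝ) => e.symm p) := e.symm.measurable
    -- the two-variable functions
    set F' : ℝ × (Fin n → ℝ) → ℝ≥0∞ := fun p => F (e.symm p) with hF'
    set G' : ℝ × (Fin n → ℝ) → ℝ≥0∞ := fun p => G (e.symm p) with hG'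
    have hF'm : Measurable F' := hFm.comp hesym
    have hG'm : Measurable G' := hGm.comp hesym
    have hint : ∀ (H : (Fin (n+1) → ℝ) → ℝ≥0∞), Measurable H →
        ∫⁻ x, H x ∂Measure.pi ν
          = ∫⁻ x, ∫⁻ y, H (e.symm (x, y)) ∂Measure.pi νr ∂ν 0 := by
      intro H hH
      rw [← (mp.symm e).lintegral_comp hH]
      exact lintegral_prod _ ((hH.comp e.symm.measurable).aemeasurable)
    set φ : ℝ → ℝ≥0∞ := fun x => ∫⁻ y, F' (x, y) ∂Measure.pi νr with hφ
    set ψ : ℝ → ℝ≥0∞ := fun x => ∫⁻ y, G' (x, y) ∂Measure.pi νr with hψ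
    have hφm : Measurable φ := hF'm.lintegral_prod_right'
    have hψm : Measurable ψ := hG'm.lintegral_prod_right'
    have hφa : Antitone φ := fun x x' h => lintegral_mono fun y =>
      hFa (hsymm_mono x x' y y h le_rfl)
    have hψa : Antitone ψ := fun x x' h => lintegral_mono fun y =>
      hGa (hsymm_mono x x' y y h le_rfl)
    calc (∫⁻ x, F x ∂Measure.pi ν) * ∫⁻ x, G x ∂Measure.pi ν
        = (∫⁻ x, φ x ∂ν 0) * ∫⁻ x, ψ x ∂ν 0 := by rw [hint F hFm, hint G hGm]
      _ ≤ ∫⁻ x, φ x * ψ x ∂ν 0 := chebyshev_antitone (ν 0) hφm hψm hφa hψa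
      _ ≤ ∫⁻ x, ∫⁻ y, F' (x, y) * G' (x, y) ∂Measure.pi νr ∂ν 0 := by
          refine lintegral_mono fun x => ?_
          exact ih νr (fun j => hν _) (fun y => F' (x, y)) (fun y => G' (x, y))
            (hF'm.comp (measurable_prodMk_left)) (hG'm.comp (measurable_prodMk_left))
            (fun y y' h => hFa (hsymm_mono x x y y' le_rfl h))
            (fun y y' h => hGa (hsymm_mono x x y y' le_rfl h))
      _ = ∫⁻ x, F x * G x ∂Measure.pi ν := (hint (fun x => F x * G x) (hFm.mul hGm)).symm

lemma harris_sets (n : ℕ) (ν : Fin n → Measure ℝ) (hν : ∀ i, IsProbabilityMeasure (ν i))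
    (S T : Set (Fin n → ℝ)) (hSm : MeasurableSet S) (hTm : MeasurableSet T)
    (hS : IsLowerSet S) (hT : IsLowerSet T) :
    Measure.pi ν S * Measure.pi ν T ≤ Measure.pi ν (S ∩ T) := by
  haveI := hν
  have hi : ∀ (U : Set (Fin n → ℝ)), IsLowerSet U →
      Antitone (U.indicator (fun _ => (1:ℝ≥0∞))) := by
    intro U hU x y hxy
    by_cases hy : y ∈ U
    · have hx : x ∈ U := hU hxy hy
      simp [hx, hy]
    · simp [hy]
  have hmul : ∀ x, S.indicator (fun _ => (1:ℝ≥0∞)) x * T.indicator (fun _ => (1:ℝ≥0∞)) x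
      = (S ∩ T).indicator (fun _ => (1:ℝ≥0∞)) x := by
    intro x
    by_cases hx : x ∈ S <;> by_cases hx' : x ∈ T <;>
      simp [indicator_apply, hx, hx', Set.mem_inter_iff]
  have h := harris_pi n ν hν (S.indicator (fun _ => 1)) (T.indicator (fun _ => 1))
    (measurable_const.indicator hSm) (measurable_const.indicator hTm)
    (hi S hS) (hi T hT)
  rw [lintegral_indicator_const hSm 1, lintegral_indicator_const hTm 1, one_mul, one_mul] at h
  calc Measure.pi ν S * Measure.pi ν T
      ≤ ∫⁻ x, S.indicator (fun _ => (1:ℝ≥0∞)) x * T.indicator (fun _ => 1) x ∂Measure.pi ν := h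
    _ = ∫⁻ x, (S ∩ T).indicator (fun _ => (1:ℝ≥0∞)) x ∂Measure.pi ν := by
        refine lintegral_congr fun x => hmul x
    _ = Measure.pi ν (S ∩ T) := by rw [lintegral_indicator_const (hSm.inter hTm) 1, one_mul]

lemma levy_fin {Ω : Type*} [MeasurableSpace Ω] (μ : Measure Ω) [IsProbabilityMeasure μ]
    (X : ℝ → Ω → ℝ) (hX0 : ∀ ω, X 0 ω = 0) (hmeas : ∀ t, Measurable (X t))
    (hindep : ∀ (n : ℕ) (τ : ℕ → ℝ), Monotone τ → (∀ i, 0 ≤ τ i) →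
      iIndepFun
        (fun i : Fin n => fun ω => X (τ (i + 1)) ω - X (τ i) ω) μ)
    (f : ℝ → ℝ) (s : Finset ℝ) (hs : ∀ t ∈ s, (0:ℝ) ≤ t) (u v u' v' : ℝ) :
    μ {ω | ∀ t ∈ s, t ∈ Icc u v → X t ω ≤ f t}
      * μ {ω | ∀ t ∈ s, t ∈ Icc u' v' → X t ω ≤ f t}
      ≤ μ {ω | ∀ t ∈ s, (t ∈ Icc u v ∨ t ∈ Icc u' v') → X t ω ≤ f t} := by
  rcases s.eq_empty_or_nonempty with rfl | hne
  · simp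
  · set m := s.card with hm
    have hm0 : 0 < m := Finset.card_pos.mpr hne
    set σ : Fin m ≃o {x // x ∈ s} := s.orderIsoOfFin rfl with hσ
    set tks : Fin m → ℝ := fun k => (σ k : ℝ) with htks
    have htks_mem : ∀ k, tks k ∈ s := fun k => (σ k).2
    have htks_nn : ∀ k, (0:ℝ) ≤ tks k := fun k => hs _ (htks_mem k)
    set τ : ℕ → ℝ := fun i => if i = 0 then 0 else tks ⟨min (i-1) (m-1), by omega⟩ with hτ
    have hτnn : ∀ i, 0 ≤ τ i := by
      intro i
      simp only [hτ]
      split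
      · exact le_rfl
      · exact htks_nn _
    have hτmono : Monotone τ := by
      intro i j hij
      by_cases hi : i = 0
      · subst hi; simp only [hτ, if_pos rfl]; exact hτnn j
      · have hj : j ≠ 0 := by omega
        simp only [hτ, if_neg hi, if_neg hj]
        have hle : (⟨min (i-1) (m-1), by omega⟩ : Fin m) ≤ ⟨min (j-1) (m-1), by omega⟩ := by
          simp only [Fin.mk_le_mk]
          omega
        exact_mod_cast σ.monotone hle
    have hInd := hindep m τ hτmono hτnn
    set V : Fin m → Ω → ℝ := fun k => fun ω => X (τ (k + 1)) ω - X (τ k) ω with hV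
    have hVm : ∀ k, Measurable (V k) := fun k => (hmeas _).sub (hmeas _)
    set Y : Ω → Fin m → ℝ := fun ω k => V k ω with hY
    have hYm : Measurable Y := measurable_pi_lambda _ hVm
    set ν : Fin m → Measure ℝ := fun k => μ.map (V k) with hν
    haveI hνP : ∀ k, IsProbabilityMeasure (ν k) :=
      fun k => Measure.isProbabilityMeasure_map (hVm k).aemeasurable
    have hmap : μ.map Y = Measure.pi ν := by
      refine (Measure.pi_eq ?_).symm
      intro B hB
      rw [Measure.map_apply hYm (MeasurableSet.univ_pi hB)]
      have hYB : Y ⁻¹' (Set.pi univ B) = ⋂ k ∈ Finset.univ, V k ⁻¹' B k := by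
        ext ω
        simp [Set.mem_pi, hY]
      rw [hYB, hInd.measure_inter_preimage_eq_mul Finset.univ (fun k _ => hB k)]
      refine Finset.prod_congr rfl fun k _ => (Measure.map_apply (hVm k) (hB k)).symm
    -- the lower sets
    set L : ℝ → ℝ → Set (Fin m → ℝ) := fun w z =>
      {y | ∀ k : Fin m, tks k ∈ Icc w z →
        (∑ i ∈ Finset.range (k.val + 1), (if h : i < m then y ⟨i, h⟩ else 0)) ≤ f (tks k)}
      with hL
    have hterm : ∀ i : ℕ, Measurable (fun y : Fin m → ℝ => if h : i < m then y ⟨i, h⟩ else 0) := by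
      intro i
      by_cases h : i < m
      · simp only [dif_pos h]; exact measurable_pi_apply _
      · simp only [dif_neg h]; exact measurable_const
    have hLm : ∀ w z, MeasurableSet (L w z) := by
      intro w z
      have : L w z = ⋂ k : Fin m, {y : Fin m → ℝ | tks k ∈ Icc w z →
          (∑ i ∈ Finset.range (k.val + 1), (if h : i < m then y ⟨i, h⟩ else 0)) ≤ f (tks k)} := by
        ext y; simp [hL, Set.mem_iInter]
      rw [this]
      refine MeasurableSet.iInter fun k => ?_
      by_cases hk : tks k ∈ Icc w z
      · simp only [hk, forall_true_left, true_implies]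
        exact measurableSet_le (Finset.measurable_sum _ fun i _ => hterm i) measurable_const
      · simp [hk]
    have hLlow : ∀ w z, IsLowerSet (L w z) := by
      intro w z y' y hle hy k hk
      refine le_trans (Finset.sum_le_sum fun i _ => ?_) (hy k hk)
      by_cases h : i < m
      · simp only [dif_pos h]; exact hle _
      · simp [dif_neg h]
    -- partial sums telescope
    have hsum : ∀ (k : Fin m) (ω : Ω),
        (∑ i ∈ Finset.range (k.val + 1), (if h : i < m then Y ω ⟨i, h⟩ else 0))
          = X (tks k) ω := by
      intro k ω
      have hcongr : ∀ i ∈ Finset.range (k.val + 1),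
          (if h : i < m then Y ω ⟨i, h⟩ else 0) = X (τ (i + 1)) ω - X (τ i) ω := by
        intro i hi
        have him : i < m := lt_of_lt_of_le (Finset.mem_range.mp hi) k.2
        rw [dif_pos him]
      rw [Finset.sum_congr rfl hcongr, Finset.sum_range_sub (fun n => X (τ n) ω)]
      have h0 : τ 0 = 0 := by simp [hτ]
      have h1 : τ (k.val + 1) = tks k := by
        simp only [hτ, if_neg (Nat.succ_ne_zero k.val), Nat.add_sub_cancel]
        congr 1
        have : min k.val (m-1) = k.val := by
          have := k.2; omega
        simp [this]
      rw [h0, h1, hX0, sub_zero]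
    -- preimage identification
    have hpre : ∀ w z, Y ⁻¹' (L w z) = {ω | ∀ t ∈ s, t ∈ Icc w z → X t ω ≤ f t} := by
      intro w z
      ext ω
      simp only [mem_preimage, hL, mem_setOf_eq]
      constructor
      · intro h t ht htwz
        have hk : tks (σ.symm ⟨t, ht⟩) = t := by simp [htks]
        have := h (σ.symm ⟨t, ht⟩) (by rw [hk]; exact htwz)
        rw [hsum] at this
        rwa [hk] at this
      · intro h k hk
        rw [hsum]
        exact h (tks k) (htks_mem k) hk
    have hfin : {ω | ∀ t ∈ s, (t ∈ Icc u v ∨ t ∈ Icc u' v') → X t ω ≤ f t}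
        = Y ⁻¹' (L u v ∩ L u' v') := by
      rw [Set.preimage_inter, hpre, hpre]
      ext ω
      simp only [mem_setOf_eq, mem_inter_iff]
      constructor
      · intro h
        exact ⟨fun t ht h1 => h t ht (Or.inl h1), fun t ht h2 => h t ht (Or.inr h2)⟩
      · rintro ⟨h1, h2⟩ t ht (h | h)
        · exact h1 t ht h
        · exact h2 t ht h
    have hmeasure : ∀ w z, μ {ω | ∀ t ∈ s, t ∈ Icc w z → X t ω ≤ f t} = Measure.pi ν (L w z) := by
      intro w z
      rw [← hpre, ← hmap, Measure.map_apply hYm (hLm w z)]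
    rw [hmeasure u v, hmeasure u' v', hfin,
      ← Measure.map_apply hYm ((hLm u v).inter (hLm u' v')), hmap]
    exact harris_sets m ν hνP _ _ (hLm u v) (hLm u' v') (hLlow u v) (hLlow u' v')

lemma exists_countable_reduction (f : ℝ → ℝ) :
    ∃ D : Set ℝ, D.Countable ∧
      ∀ (t : ℝ) (q : ℚ), f t < (q:ℝ) → t ∉ D →
        ∀ ε > (0:ℝ), ∃ d ∈ D, d ∈ Ioo t (t + ε) ∧ f d < (q:ℝ) := by
  classical
  set T : Set ℝ := {t | ∃ q : ℚ, f t < (q:ℝ) ∧ ∃ ε > (0:ℝ), ∀ s ∈ Ioo t (t + ε), (q:ℝ) ≤ f s}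
    with hT
  set pick : ℚ × ℚ × ℚ → ℝ := fun p =>
    if h : ∃ x : ℝ, x ∈ Ioo ((p.2.1 : ℝ)) ((p.2.2 : ℝ)) ∧ f x < (p.1 : ℝ) then h.choose else 0
    with hpick
  set P : Set ℝ := Set.range pick with hP
  have hTc : T.Countable := by
    have hsub : T ⊆ ⋃ q : ℚ,
        {t | f t < (q:ℝ) ∧ ∃ ε > (0:ℝ), ∀ s ∈ Ioo t (t + ε), (q:ℝ) ≤ f s} := by
      rintro t ⟨q, hq1, hq2⟩
      exact Set.mem_iUnion.mpr ⟨q, hq1, hq2⟩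
    refine Set.Countable.mono hsub (Set.countable_iUnion fun q => ?_)
    set Tq := {t | f t < (q:ℝ) ∧ ∃ ε > (0:ℝ), ∀ s ∈ Ioo t (t + ε), (q:ℝ) ≤ f s} with hTq
    have hch : ∀ t ∈ Tq, ∃ r : ℚ, t < (r:ℝ) ∧ ∀ s ∈ Ioo t ((r:ℝ)), (q:ℝ) ≤ f s := by
      rintro t ⟨-, ε, hε, h⟩
      obtain ⟨r, hr1, hr2⟩ := exists_rat_btwn (show t < t + ε by linarith)
      exact ⟨r, hr1, fun s hs => h s ⟨hs.1, lt_trans hs.2 hr2⟩⟩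
    choose! r hr1 hr2 using hch
    have hsub2 : Tq ⊆ ⋃ ρ : ℚ, {t | t ∈ Tq ∧ r t = ρ} := by
      intro t ht
      exact Set.mem_iUnion.mpr ⟨r t, ht, rfl⟩
    refine Set.Countable.mono hsub2 (Set.countable_iUnion fun ρ => ?_)
    refine Set.Subsingleton.countable ?_
    rintro t ⟨ht, hρ⟩ t' ⟨ht', hρ'⟩
    by_contra hne
    rcases lt_or_gt_of_ne hne with h | h
    · have : t' ∈ Ioo t ((r t : ℝ)) := by
        refine ⟨h, ?_⟩
        rw [hρ, ← hρ']
        exact hr1 t' ht'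
      have := hr2 t ht t' this
      have := ht'.1
      linarith
    · have : t ∈ Ioo t' ((r t' : ℝ)) := by
        refine ⟨h, ?_⟩
        rw [hρ', ← hρ]
        exact hr1 t ht
      have := hr2 t' ht' t this
      have := ht.1
      linarith
  refine ⟨T ∪ P, hTc.union (Set.countable_range pick), ?_⟩
  intro t q hq htD ε hε
  have htT : t ∉ T := fun h => htD (Or.inl h)
  have hnot : ∀ ε' > (0:ℝ), ∃ s ∈ Ioo t (t + ε'), f s < (q:ℝ) := by
    intro ε' hε'
    by_contra hcon
    push_neg at hcon
    exact htT ⟨q, hq, ε', hε', fun s hs => hcon s hs⟩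
  obtain ⟨s, hs, hsf⟩ := hnot ε hε
  obtain ⟨α, hα1, hα2⟩ := exists_rat_btwn hs.1
  obtain ⟨β, hβ1, hβ2⟩ := exists_rat_btwn hs.2
  have hex : ∃ x : ℝ, x ∈ Ioo ((α:ℝ)) ((β:ℝ)) ∧ f x < (q:ℝ) := ⟨s, ⟨hα2, hβ1⟩, hsf⟩
  set d := pick (q, α, β) with hd
  have hdspec : d ∈ Ioo ((α:ℝ)) ((β:ℝ)) ∧ f d < (q:ℝ) := by
    rw [hd, hpick]
    simp only [dif_pos hex]
    exact hex.choose_spec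
  refine ⟨d, Or.inr ⟨(q, α, β), rfl⟩, ⟨lt_trans hα1 hdspec.1.1, lt_trans hdspec.1.2 hβ2⟩,
    hdspec.2⟩

/-- For a Lévy process `X` (càdlàg, `X 0 = 0`, stationary independent increments),
a measurable function `f` and `0 ≤ a < b < c`, the non-exit probability over `[a,c]`
dominates the product of the non-exit probabilities over `[a,b]` and `[b,c]`. -/
theorem stmt5 {Ω : Type*} [MeasurableSpace Ω] (μ : Measure Ω) [IsProbabilityMeasure μ]
    (X : ℝ → Ω → ℝ)
    (hX0 : ∀ ω, X 0 ω = 0)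
    (hmeas : ∀ t, Measurable (X t))
    (hcadlag : ∀ ω, ∀ t ≥ (0:ℝ),
      Filter.Tendsto (fun s => X s ω) (nhdsWithin t (Set.Ici t)) (nhds (X t ω)))
    (hstat : ∀ s t : ℝ, 0 ≤ s → 0 ≤ t →
      IdentDistrib (fun ω => X (s + t) ω - X s ω) (X t) μ μ)
    (hindep : ∀ (n : ℕ) (τ : ℕ → ℝ), Monotone τ → (∀ i, 0 ≤ τ i) →
      iIndepFun
        (fun i : Fin n => fun ω => X (τ (i + 1)) ω - X (τ i) ω) μ)
    (f : ℝ → ℝ) (hf : Measurable f)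
    (a b c : ℝ) (ha : 0 ≤ a) (hab : a < b) (hbc : b < c) :
    μ {ω | ∀ t ∈ Icc a b, X t ω ≤ f t} * μ {ω | ∀ t ∈ Icc b c, X t ω ≤ f t}
      ≤ μ {ω | ∀ t ∈ Icc a c, X t ω ≤ f t} := by
  classical
  obtain ⟨D0, hD0c, hprop0⟩ := exists_countable_reduction f
  set D : Set ℝ := D0 ∪ {a, b, c} with hD
  have hDc : D.Countable := hD0c.union (Set.Finite.countable (by simp : ({a, b, c} : Set ℝ).Finite))
  have hprop : ∀ (t : ℝ) (q : ℚ), f t < (q:ℝ) → t ∉ D →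
      ∀ ε > (0:ℝ), ∃ d ∈ D, d ∈ Ioo t (t + ε) ∧ f d < (q:ℝ) := by
    intro t q hq htD ε hε
    obtain ⟨d, hd1, hd2, hd3⟩ := hprop0 t q hq (fun h => htD (Or.inl h)) ε hε
    exact ⟨d, Or.inl hd1, hd2, hd3⟩
  have haD : a ∈ D := Or.inr (by simp)
  have hbD : b ∈ D := Or.inr (by simp)
  have hcD : c ∈ D := Or.inr (by simp)
  -- the key pointwise lemma
  have key : ∀ u v : ℝ, 0 ≤ u → v ∈ D → ∀ ω : Ω,
      (∀ s ∈ D ∩ Icc u v, X s ω ≤ f s) → ∀ t ∈ Icc u v, X t ω ≤ f t := by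
    intro u v hu hvD ω hω t ht
    by_cases htD : t ∈ D
    · exact hω t ⟨htD, ht⟩
    · have htv : t < v := lt_of_le_of_ne ht.2 (fun h => htD (h ▸ hvD))
      have hqle : ∀ q : ℚ, f t < (q:ℝ) → X t ω ≤ (q:ℝ) := by
        intro q hfq
        have hseq : ∀ n : ℕ, ∃ d, d ∈ D ∧ d ∈ Ioo t (t + min (1/((n:ℝ)+1)) (v - t))
            ∧ f d < (q:ℝ) := by
          intro n
          have hpos : (0:ℝ) < min (1/((n:ℝ)+1)) (v - t) := lt_min (by positivity) (by linarith)
          obtain ⟨d, hd1, hd2, hd3⟩ := hprop t q hfq htD _ hpos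
          exact ⟨d, hd1, hd2, hd3⟩
        choose d hdD hdIoo hdf using hseq
        have hub : ∀ n : ℕ, d n ≤ t + 1/(n+1) := by
          intro n
          have h1 := (hdIoo n).2
          have h2 : min (1/((n:ℝ)+1)) (v - t) ≤ 1/((n:ℝ)+1) := min_le_left _ _
          have : d n ≤ t + 1/((n:ℝ)+1) := by linarith
          simpa using this
        have hlb : ∀ n : ℕ, t ≤ d n := fun n => le_of_lt (hdIoo n).1
        have htend : Filter.Tendsto d Filter.atTop (nhds t) := by
          have h1 : Filter.Tendsto (fun _ : ℕ => t) Filter.atTop (nhds t) :=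
            tendsto_const_nhds
          have h2 : Filter.Tendsto (fun n : ℕ => t + 1/(n+1)) Filter.atTop (nhds t) := by
            have := tendsto_one_div_add_atTop_nhds_zero_nat (𝕜 := ℝ)
            have := h1.add this
            simpa using this
          exact tendsto_of_tendsto_of_tendsto_of_le_of_le h1 h2 hlb hub
        have htendW : Filter.Tendsto d Filter.atTop (nhdsWithin t (Set.Ici t)) :=
          tendsto_nhdsWithin_of_tendsto_nhds_of_eventually_within d htend
            (Filter.Eventually.of_forall hlb)
        have hXtend : Filter.Tendsto (fun n => X (d n) ω) Filter.atTop (nhds (X t ω)) :=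
          (hcadlag ω t (le_trans hu ht.1)).comp htendW
        refine le_of_tendsto hXtend (Filter.Eventually.of_forall fun n => ?_)
        have hdv : d n ∈ Icc u v := by
          have h1 := (hdIoo n).1
          have h2 := (hdIoo n).2
          have h3 : min (1/((n:ℝ)+1)) (v - t) ≤ v - t := min_le_right _ _
          exact ⟨le_trans ht.1 (le_of_lt h1), by linarith⟩
        exact le_trans (hω (d n) ⟨hdD n, hdv⟩) (le_of_lt (hdf n))
      by_contra hcon
      push_neg at hcon
      obtain ⟨q, hq1, hq2⟩ := exists_rat_btwn hcon
      exact absurd (hqle q hq1) (not_le.mpr hq2)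
  -- enumeration of relevant countable time set
  set E : Set ℝ := D ∩ Icc a c with hE
  have hEc : E.Countable := hDc.mono (Set.inter_subset_left)
  have hEne : E.Nonempty := ⟨a, haD, le_refl a, le_of_lt (lt_trans hab hbc)⟩
  obtain ⟨e, hee⟩ := hEc.exists_eq_range hEne
  set K : ℝ → ℝ → ℕ → Set Ω := fun u v n =>
    {ω | ∀ i < n, e i ∈ Icc u v → X (e i) ω ≤ f (e i)} with hK
  have hKmeas : ∀ u v n, MeasurableSet (K u v n) := by
    intro u v n
    have : K u v n = ⋂ (i : ℕ) (_ : i < n), {ω | e i ∈ Icc u v → X (e i) ω ≤ f (e i)} := by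
      ext ω; simp [hK, Set.mem_iInter]
    rw [this]
    refine MeasurableSet.iInter fun i => MeasurableSet.iInter fun _ => ?_
    by_cases hi : e i ∈ Icc u v
    · simp only [hi, true_implies]
      exact measurableSet_le (hmeas _) measurable_const
    · simp [hi]
  have hKanti : ∀ u v, Antitone (K u v) := by
    intro u v n m hnm ω hω i hi hic
    exact hω i (lt_of_lt_of_le hi hnm) hic
  have hKeq : ∀ u v : ℝ, 0 ≤ u → v ∈ D → Icc u v ⊆ Icc a c →
      (⋂ n, K u v n) = {ω | ∀ t ∈ Icc u v, X t ω ≤ f t} := by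
    intro u v hu hvD hsub
    ext ω
    simp only [Set.mem_iInter, hK, mem_setOf_eq]
    constructor
    · intro h
      refine key u v hu hvD ω ?_
      intro s hs
      have hsE : s ∈ E := ⟨hs.1, hsub hs.2⟩
      rw [hee] at hsE
      obtain ⟨i, rfl⟩ := hsE
      exact h (i+1) i (Nat.lt_succ_self i) hs.2
    · intro h n i hi hic
      exact h (e i) hic
  -- limits
  have htendsto : ∀ u v : ℝ, Filter.Tendsto (fun n => μ (K u v n)) Filter.atTop
      (nhds (μ (⋂ n, K u v n))) := by
    intro u v
    exact tendsto_measure_iInter_atTop (fun n => (hKmeas u v n).nullMeasurableSet)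
      (hKanti u v) ⟨0, measure_ne_top μ _⟩
  -- finite inequality
  have hfinite : ∀ n : ℕ, μ (K a b n) * μ (K b c n) ≤ μ (K a c n) := by
    intro n
    set sn : Finset ℝ := (Finset.range n).image e with hsn
    have hmem : ∀ t, t ∈ sn ↔ ∃ i < n, e i = t := by
      intro t; simp [hsn, Finset.mem_image, Finset.mem_range]
    have hKsn : ∀ u v : ℝ, K u v n = {ω | ∀ t ∈ sn, t ∈ Icc u v → X t ω ≤ f t} := by
      intro u v
      ext ω
      simp only [hK, mem_setOf_eq]
      constructor
      · intro h t ht htuv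
        obtain ⟨i, hi, rfl⟩ := (hmem t).mp ht
        exact h i hi htuv
      · intro h i hi hic
        exact h (e i) ((hmem _).mpr ⟨i, hi, rfl⟩) hic
    have hsnn : ∀ t ∈ sn, (0:ℝ) ≤ t := by
      intro t ht
      obtain ⟨i, hi, rfl⟩ := (hmem t).mp ht
      have : e i ∈ E := by rw [hee]; exact ⟨i, rfl⟩
      exact le_trans ha this.2.1
    have hKac : K a c n = {ω | ∀ t ∈ sn, (t ∈ Icc a b ∨ t ∈ Icc b c) → X t ω ≤ f t} := by
      rw [hKsn a c]
      have hiff : ∀ t : ℝ, t ∈ Icc a c ↔ (t ∈ Icc a b ∨ t ∈ Icc b c) := by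
        intro t
        rw [← Set.Icc_union_Icc_eq_Icc (le_of_lt hab) (le_of_lt hbc)]
        exact Set.mem_union t _ _
      ext ω
      simp only [mem_setOf_eq]
      constructor
      · intro h t ht hor
        exact h t ht ((hiff t).mpr hor)
      · intro h t ht hic
        exact h t ht ((hiff t).mp hic)
    rw [hKsn a b, hKsn b c, hKac]
    exact levy_fin μ X hX0 hmeas hindep f sn hsnn a b b c
  -- assemble
  have heq1 := hKeq a b ha hbD (Set.Icc_subset_Icc le_rfl (le_of_lt hbc))
  have heq2 := hKeq b c (le_trans ha (le_of_lt hab)) hcD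
    (Set.Icc_subset_Icc (le_of_lt hab) le_rfl)
  have heq3 := hKeq a c ha hcD (Set.Icc_subset_Icc le_rfl le_rfl)
  have h1 := htendsto a b
  have h2 := htendsto b c
  have h3 := htendsto a c
  rw [heq1] at h1
  rw [heq2] at h2
  rw [heq3] at h3
  have hmul := ENNReal.Tendsto.mul h1 (Or.inr (measure_ne_top μ _)) h2
    (Or.inr (measure_ne_top μ _))
  exact le_of_tendsto_of_tendsto' hmul h3 hfinite
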